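/- (Principle of maximum guessed quantum work, composite-state form.) The one-time-measurement average of the guessed quantum work satisfies Σ_i (exp(−β ε_i)/Z_S0)·W̃(i) ≥ ΔF_S + β⁻¹·D. -/

import Mathlib

open Matrix Kronecker BigOperators Finset

noncomputable section

/-- Partial trace over the bath (second tensor factor). -/
def ptraceB {n m : ℕ} (X : Matrix (Fin n × Fin m) (Fin n × Fin m) ℂ) :
    Matrix (Fin n) (Fin n) ℂ :=
  Matrix.of fun i i' => ∑ j, X (i, j) (i', j)

/-- Outer product `|v⟩⟨v|`. -/
def outer {k : ℕ} (v : Fin k → ℂ) : Matrix (Fin k) (Fin k) ℂ :=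
  Matrix.vecMulVec v (star v)

/-- Partition function `Z = Tr exp (−β H)` (real part of the trace). -/
def Zpart (β : ℝ) {k : ℕ} (H : Matrix (Fin k) (Fin k) ℂ) : ℝ :=
  (NormedSpace.exp ((-β) • H)).trace.re

/-- Gibbs state `exp (−β H) / Z`. -/
def gibbs (β : ℝ) {k : ℕ} (H : Matrix (Fin k) (Fin k) ℂ) : Matrix (Fin k) (Fin k) ℂ :=
  ((Zpart β H : ℂ)⁻¹) • NormedSpace.exp ((-β) • H)

/-- The channel `Φ(ρ) = Tr_B [U (ρ ⊗ τB) U†]`. -/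
def channel {n m : ℕ} (U : Matrix (Fin n × Fin m) (Fin n × Fin m) ℂ)
    (τB : Matrix (Fin m) (Fin m) ℂ) (ρ : Matrix (Fin n) (Fin n) ℂ) :
    Matrix (Fin n) (Fin n) ℂ :=
  ptraceB (U * (ρ ⊗ₖ τB) * Uᴴ)


/-- Trace of `(A ⊗ 1) X` equals trace of `A · Tr_B X`. -/
lemma trace_kron_one (n m : ℕ) (A : Matrix (Fin n) (Fin n) ℂ)
    (X : Matrix (Fin n × Fin m) (Fin n × Fin m) ℂ) :
    ((A ⊗ₖ (1 : Matrix (Fin m) (Fin m) ℂ)) * X).trace = (A * ptraceB X).trace := by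
  simp only [Matrix.trace, Matrix.diag, Matrix.mul_apply, Matrix.kroneckerMap_apply,
    Matrix.one_apply, Fintype.sum_prod_type, ptraceB, Matrix.of_apply, mul_ite, mul_one, mul_zero,
    ite_mul, zero_mul, Finset.sum_ite_eq, Finset.mem_univ, if_true, Finset.mul_sum]
  exact Finset.sum_congr rfl fun i _ => Finset.sum_comm

lemma conj_exp (k : ℕ) (P : Matrix (Fin k) (Fin k) ℂ)
    (h1 : Pᴴ * P = 1) (h2 : P * Pᴴ = 1) (d : Fin k → ℂ) :
    NormedSpace.exp (P * Matrix.diagonal d * Pᴴ)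
      = P * Matrix.diagonal (fun i => Complex.exp (d i)) * Pᴴ := by
  have h := Matrix.exp_units_conj (⟨P, Pᴴ, h2, h1⟩ : (Matrix (Fin k) (Fin k) ℂ)ˣ)
    (Matrix.diagonal d)
  simp only [Units.inv_mk] at h
  rw [h, Matrix.exp_diagonal,
    show NormedSpace.exp d = fun i => Complex.exp (d i) from
      funext fun i => by rw [Pi.coe_exp, ← Complex.exp_eq_exp_ℂ]]

lemma spectral_pack (k : ℕ) (H : Matrix (Fin k) (Fin k) ℂ)
    (e : Fin k → Fin k → ℂ) (ε : Fin k → ℝ)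
    (he : ∀ i i', ∑ x, (starRingEnd ℂ) (e i x) * e i' x = if i = i' then 1 else 0)
    (heig : ∀ i, H *ᵥ e i = (ε i : ℂ) • e i) (β : ℝ) :
    (NormedSpace.exp ((-β) • H)).trace.re = ∑ i, Real.exp (-(β * ε i)) ∧
    ((H * NormedSpace.exp ((-β) • H)).trace).re = ∑ i, ε i * Real.exp (-(β * ε i)) := by
  set P : Matrix (Fin k) (Fin k) ℂ := Matrix.of (fun x i => e i x) with hP
  have h1 : Pᴴ * P = 1 := by
    ext i i'
    simpa [Matrix.mul_apply, Matrix.one_apply, hP] using he i i'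
  have h2 : P * Pᴴ = 1 := mul_eq_one_comm.mp h1
  set d : Fin k → ℂ := fun i => (ε i : ℂ) with hd
  have hHP : H * P = P * Matrix.diagonal d := by
    ext x i
    have := congrFun (heig i) x
    simp only [Matrix.mulVec, dotProduct, Pi.smul_apply, smul_eq_mul] at this
    simp [Matrix.mul_apply, Matrix.diagonal, hP, hd, this, mul_comm]
  have hH : H = P * Matrix.diagonal d * Pᴴ := by
    calc H = H * (P * Pᴴ) := by rw [h2, mul_one]
    _ = (H * P) * Pᴴ := by rw [mul_assoc]
    _ = P * Matrix.diagonal d * Pᴴ := by rw [hHP]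
  have hsmul : (-β) • H = P * Matrix.diagonal (fun i => ((-(β * ε i) : ℝ) : ℂ)) * Pᴴ := by
    have hdd : (fun i => ((-(β * ε i) : ℝ) : ℂ)) = (-β) • d := by
      funext i
      simp only [hd, Pi.smul_apply, Complex.real_smul]
      push_cast
      ring
    rw [hH, hdd, Matrix.diagonal_smul, Matrix.mul_smul, Matrix.smul_mul]
  have hexp : NormedSpace.exp ((-β) • H)
      = P * Matrix.diagonal (fun i => ((Real.exp (-(β * ε i)) : ℝ) : ℂ)) * Pᴴ := by
    rw [hsmul, conj_exp k P h1 h2,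
      show (fun i => Complex.exp ((-(β * ε i) : ℝ) : ℂ))
          = fun i => ((Real.exp (-(β * ε i)) : ℝ) : ℂ) from
        funext fun i => (Complex.ofReal_exp _).symm]
  have htr : ∀ D : Matrix (Fin k) (Fin k) ℂ, (P * D * Pᴴ).trace = D.trace := by
    intro D
    rw [Matrix.trace_mul_cycle, h1, one_mul]
  constructor
  · rw [hexp, htr, Matrix.trace_diagonal]
    rw [Complex.re_sum]
    simp only [Complex.ofReal_re]
  · have : H * NormedSpace.exp ((-β) • H)
        = P * Matrix.diagonal (fun i => (ε i : ℂ) * ((Real.exp (-(β * ε i)) : ℝ) : ℂ)) * Pᴴ := by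
      rw [hexp, hH]
      calc P * Matrix.diagonal d * Pᴴ * (P * Matrix.diagonal (fun i => ((Real.exp (-(β * ε i)) : ℝ) : ℂ)) * Pᴴ)
          = P * Matrix.diagonal d * (Pᴴ * P) * Matrix.diagonal (fun i => ((Real.exp (-(β * ε i)) : ℝ) : ℂ)) * Pᴴ := by
            simp only [mul_assoc]
        _ = P * (Matrix.diagonal d * Matrix.diagonal (fun i => ((Real.exp (-(β * ε i)) : ℝ) : ℂ))) * Pᴴ := by
            rw [h1]; simp only [mul_one, mul_assoc]
        _ = _ := by rw [Matrix.diagonal_mul_diagonal]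
    rw [this, htr, Matrix.trace_diagonal, Complex.re_sum]
    simp only [← Complex.ofReal_mul, Complex.ofReal_re]

theorem max_guessed_work_composite
    (n m : ℕ) (hn : 1 ≤ n) (hm : 1 ≤ m)
    (β : ℝ) (hβ : 0 < β)
    (HS0 HSt : Matrix (Fin n) (Fin n) ℂ)
    (hHS0 : HS0.IsHermitian) (hHSt : HSt.IsHermitian)
    (HB : Matrix (Fin m) (Fin m) ℂ) (hHB : HB.IsHermitian)
    (e : Fin n → Fin n → ℂ) (ε : Fin n → ℝ)
    (he : ∀ i i', ∑ x, (starRingEnd ℂ) (e i x) * e i' x = if i = i' then 1 else 0)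
    (heig : ∀ i, HS0 *ᵥ e i = (ε i : ℂ) • e i)
    (f : Fin m → Fin m → ℂ) (q : Fin m → ℝ)
    (hf : ∀ j j', ∑ x, (starRingEnd ℂ) (f j x) * f j' x = if j = j' then 1 else 0)
    (hfeig : ∀ j, HB *ᵥ f j = (q j : ℂ) • f j)
    (U : Matrix (Fin n × Fin m) (Fin n × Fin m) ℂ)
    (hU : U ∈ Matrix.unitaryGroup (Fin n × Fin m) ℂ)
    (E : Fin n → ℝ)
    (hE : ∀ i, E i = ((HSt * channel U (gibbs β HB) (outer (e i))).trace).re)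
    (Zt : ℝ) (hZt : Zt = ∑ i, Real.exp (-(β * E i)))
    (p : Fin n → ℝ) (hp : ∀ i, p i = Real.exp (-(β * E i)) / Zt)
    (Θ : Matrix (Fin n × Fin m) (Fin n × Fin m) ℂ)
    (hΘ : Θ = ∑ i, (p i : ℂ) • (U * (outer (e i) ⊗ₖ gibbs β HB) * Uᴴ))
    (lam : Fin n → Fin m → ℝ)
    (hlam : ∀ i j, lam i j = p i * Real.exp (-(β * q j)) / Zpart β HB)
    (Qg : ℝ)
    (hQg : Qg = ((HB * gibbs β HB).trace).re
      - ((((1 : Matrix (Fin n) (Fin n) ℂ) ⊗ₖ HB) * Θ).trace).re)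
    (Wg : Fin n → ℝ) (hWg : ∀ i, Wg i = (E i - ε i) - Qg)
    (D : ℝ)
    (hD : D = (∑ i, ∑ j, lam i j * Real.log (lam i j))
      + β * (((HSt ⊗ₖ (1 : Matrix (Fin m) (Fin m) ℂ)) * Θ).trace).re
      + β * ((((1 : Matrix (Fin n) (Fin n) ℂ) ⊗ₖ HB) * Θ).trace).re
      + Real.log (Zpart β HSt * Zpart β HB))
    (ΔF : ℝ) (hΔF : ΔF = -(β⁻¹ * Real.log (Zpart β HSt / Zpart β HS0))) :
    ∑ i, (Real.exp (-(β * ε i)) / Zpart β HS0) * Wg i ≥ ΔF + β⁻¹ * D := by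
  have hβne : β ≠ 0 := ne_of_gt hβ
  have hnN : Nonempty (Fin n) := Fin.pos_iff_nonempty.mp hn
  have hmN : Nonempty (Fin m) := Fin.pos_iff_nonempty.mp hm
  -- spectral facts
  have packS0 := spectral_pack n HS0 e ε he heig β
  have packB := spectral_pack m HB f q hf hfeig β
  have hZ0 : Zpart β HS0 = ∑ i, Real.exp (-(β * ε i)) := packS0.1
  have hZB : Zpart β HB = ∑ j, Real.exp (-(β * q j)) := packB.1
  have hZ0pos : 0 < Zpart β HS0 := by
    rw [hZ0]; exact Finset.sum_pos (fun i _ => Real.exp_pos _) Finset.univ_nonempty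
  have hZBpos : 0 < Zpart β HB := by
    rw [hZB]; exact Finset.sum_pos (fun j _ => Real.exp_pos _) Finset.univ_nonempty
  -- positivity of Zpart β HSt via the spectral theorem
  have hZstpos : 0 < Zpart β HSt := by
    have he' : ∀ i i', ∑ x, (starRingEnd ℂ) ((hHSt.eigenvectorBasis i) x)
        * ((hHSt.eigenvectorBasis i') x) = if i = i' then 1 else 0 := by
      intro i i'
      have := (orthonormal_iff_ite.mp hHSt.eigenvectorBasis.orthonormal) i i'
      simpa [PiLp.inner_apply, RCLike.inner_apply, mul_comm] using this
    have heig' : ∀ i, HSt *ᵥ ⇑(hHSt.eigenvectorBasis i)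
        = ((hHSt.eigenvalues i : ℝ) : ℂ) • ⇑(hHSt.eigenvectorBasis i) := by
      intro i
      rw [hHSt.mulVec_eigenvectorBasis i]
      funext x
      simp [Complex.real_smul]
    have := (spectral_pack n HSt (fun i => ⇑(hHSt.eigenvectorBasis i)) hHSt.eigenvalues
      he' heig' β).1
    rw [show Zpart β HSt = (NormedSpace.exp ((-β) • HSt)).trace.re from rfl, this]
    exact Finset.sum_pos (fun i _ => Real.exp_pos _) Finset.univ_nonempty
  -- bath energy
  have hTB : ((HB * gibbs β HB).trace).re
      = (∑ j, q j * Real.exp (-(β * q j))) / Zpart β HB := by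
    unfold gibbs
    rw [Matrix.mul_smul, Matrix.trace_smul, smul_eq_mul, ← Complex.ofReal_inv,
      Complex.re_ofReal_mul, packB.2, div_eq_inv_mul]
  -- system energy of Θ
  have hTS : (((HSt ⊗ₖ (1 : Matrix (Fin m) (Fin m) ℂ)) * Θ).trace).re = ∑ i, p i * E i := by
    rw [hΘ, Finset.mul_sum, Matrix.trace_sum, Complex.re_sum]
    refine Finset.sum_congr rfl fun i _ => ?_
    rw [Matrix.mul_smul, Matrix.trace_smul, smul_eq_mul, Complex.re_ofReal_mul,
      trace_kron_one, hE i]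
    rfl
  -- scalar facts
  have hZtpos : 0 < Zt := by
    rw [hZt]; exact Finset.sum_pos (fun i _ => Real.exp_pos _) Finset.univ_nonempty
  have hppos : ∀ i, 0 < p i := fun i => by
    rw [hp]; exact div_pos (Real.exp_pos _) hZtpos
  have hsump : ∑ i, p i = 1 := by
    simp only [hp]
    rw [← Finset.sum_div, ← hZt, div_self (ne_of_gt hZtpos)]
  have hlogp : ∀ i, Real.log (p i) = -(β * E i) - Real.log Zt := fun i => by
    rw [hp, Real.log_div (Real.exp_ne_zero _) (ne_of_gt hZtpos), Real.log_exp]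
  have hplogp : ∑ i, p i * Real.log (p i) = -(β * ∑ i, p i * E i) - Real.log Zt := by
    calc ∑ i, p i * Real.log (p i)
        = ∑ i, ((-β) * (p i * E i) - Real.log Zt * p i) := by
          refine Finset.sum_congr rfl fun i _ => ?_
          rw [hlogp i]; ring
      _ = -(β * ∑ i, p i * E i) - Real.log Zt := by
          rw [Finset.sum_sub_distrib, ← Finset.mul_sum, ← Finset.mul_sum, hsump]
          ring
  have hloglam : ∀ i j, Real.log (lam i j)
      = Real.log (p i) - β * q j - Real.log (Zpart β HB) := fun i j => by
    rw [hlam, Real.log_div (mul_ne_zero (ne_of_gt (hppos i)) (Real.exp_ne_zero _))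
      (ne_of_gt hZBpos), Real.log_mul (ne_of_gt (hppos i)) (Real.exp_ne_zero _), Real.log_exp]
    ring
  have hS : (∑ i, ∑ j, lam i j * Real.log (lam i j))
      = (∑ i, p i * Real.log (p i))
        - β * ((∑ j, q j * Real.exp (-(β * q j))) / Zpart β HB) - Real.log (Zpart β HB) := by
    have step1 : ∀ i j, lam i j * Real.log (lam i j)
        = (p i / Zpart β HB) * ((Real.log (p i) - Real.log (Zpart β HB)) * Real.exp (-(β * q j))
            - β * (q j * Real.exp (-(β * q j)))) := by
      intro i j
      rw [hloglam i j, hlam i j]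
      ring
    calc ∑ i, ∑ j, lam i j * Real.log (lam i j)
        = ∑ i, (p i / Zpart β HB) * ((Real.log (p i) - Real.log (Zpart β HB)) * Zpart β HB
            - β * ∑ j, q j * Real.exp (-(β * q j))) := by
          refine Finset.sum_congr rfl fun i _ => ?_
          rw [Finset.sum_congr rfl fun j _ => step1 i j, ← Finset.mul_sum,
            Finset.sum_sub_distrib, ← Finset.mul_sum, ← Finset.mul_sum, ← hZB]
      _ = ∑ i, (p i * Real.log (p i) - Real.log (Zpart β HB) * p i
            - (β * ((∑ j, q j * Real.exp (-(β * q j))) / Zpart β HB)) * p i) := by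
          refine Finset.sum_congr rfl fun i _ => ?_
          field_simp
      _ = _ := by
          rw [Finset.sum_sub_distrib, Finset.sum_sub_distrib, ← Finset.mul_sum,
            ← Finset.mul_sum, hsump]
          ring
  -- key identity for D
  have hD' : D = -Real.log Zt - β * Qg + Real.log (Zpart β HSt) := by
    rw [hD, hS, hplogp, hTS, hQg, hTB,
      Real.log_mul (ne_of_gt hZstpos) (ne_of_gt hZBpos)]
    ring
  have hΔF' : ΔF = β⁻¹ * Real.log (Zpart β HS0) - β⁻¹ * Real.log (Zpart β HSt) := by
    rw [hΔF, Real.log_div (ne_of_gt hZstpos) (ne_of_gt hZ0pos)]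
    ring
  -- Gibbs distribution over initial energies
  have hGpos : ∀ i, 0 < Real.exp (-(β * ε i)) / Zpart β HS0 := fun i =>
    div_pos (Real.exp_pos _) hZ0pos
  have hsumG : ∑ i, Real.exp (-(β * ε i)) / Zpart β HS0 = 1 := by
    rw [← Finset.sum_div, ← hZ0, div_self (ne_of_gt hZ0pos)]
  have hlogG : ∀ i, Real.log (Real.exp (-(β * ε i)) / Zpart β HS0)
      = -(β * ε i) - Real.log (Zpart β HS0) := fun i => by
    rw [Real.log_div (Real.exp_ne_zero _) (ne_of_gt hZ0pos), Real.log_exp]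
  -- Gibbs' inequality
  have key : ∑ i, (Real.exp (-(β * ε i)) / Zpart β HS0)
      * Real.log (p i / (Real.exp (-(β * ε i)) / Zpart β HS0)) ≤ 0 := by
    calc ∑ i, (Real.exp (-(β * ε i)) / Zpart β HS0)
          * Real.log (p i / (Real.exp (-(β * ε i)) / Zpart β HS0))
        ≤ ∑ i, (Real.exp (-(β * ε i)) / Zpart β HS0)
          * (p i / (Real.exp (-(β * ε i)) / Zpart β HS0) - 1) := by
          refine Finset.sum_le_sum fun i _ => ?_
          exact mul_le_mul_of_nonneg_left
            (Real.log_le_sub_one_of_pos (div_pos (hppos i) (hGpos i))) (le_of_lt (hGpos i))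
      _ = ∑ i, (p i - Real.exp (-(β * ε i)) / Zpart β HS0) := by
          refine Finset.sum_congr rfl fun i _ => ?_
          rw [mul_sub, mul_one, mul_div_cancel₀ _ (ne_of_gt (hGpos i))]
      _ = 0 := by rw [Finset.sum_sub_distrib, hsump, hsumG, sub_self]
  have expand : ∀ i, Real.log (p i / (Real.exp (-(β * ε i)) / Zpart β HS0))
      = -(β * (E i - ε i)) - Real.log Zt + Real.log (Zpart β HS0) := fun i => by
    rw [Real.log_div (ne_of_gt (hppos i)) (ne_of_gt (hGpos i)), hlogp i, hlogG i]
    ring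
  have main : -(β * (∑ i, (Real.exp (-(β * ε i)) / Zpart β HS0) * (E i - ε i)))
      - Real.log Zt + Real.log (Zpart β HS0) ≤ 0 := by
    have hrw : ∑ i, (Real.exp (-(β * ε i)) / Zpart β HS0)
        * Real.log (p i / (Real.exp (-(β * ε i)) / Zpart β HS0))
        = -(β * (∑ i, (Real.exp (-(β * ε i)) / Zpart β HS0) * (E i - ε i)))
          - Real.log Zt + Real.log (Zpart β HS0) := by
      calc ∑ i, (Real.exp (-(β * ε i)) / Zpart β HS0)
            * Real.log (p i / (Real.exp (-(β * ε i)) / Zpart β HS0))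
          = ∑ i, ((-β) * ((Real.exp (-(β * ε i)) / Zpart β HS0) * (E i - ε i))
              + (Real.log (Zpart β HS0) - Real.log Zt)
                * (Real.exp (-(β * ε i)) / Zpart β HS0)) := by
            refine Finset.sum_congr rfl fun i _ => ?_
            rw [expand i]
            ring
        _ = _ := by
            rw [Finset.sum_add_distrib, ← Finset.mul_sum, ← Finset.mul_sum, hsumG]
            ring
    linarith [key, hrw.le, hrw.ge]
  have core : ∑ i, (Real.exp (-(β * ε i)) / Zpart β HS0) * (E i - ε i)
      ≥ β⁻¹ * (Real.log (Zpart β HS0) - Real.log Zt) := by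
    have h1 : Real.log (Zpart β HS0) - Real.log Zt
        ≤ β * (∑ i, (Real.exp (-(β * ε i)) / Zpart β HS0) * (E i - ε i)) := by linarith
    have h2 := mul_le_mul_of_nonneg_left h1 (le_of_lt (inv_pos.mpr hβ))
    rwa [← mul_assoc, inv_mul_cancel₀ hβne, one_mul] at h2
  -- assemble
  have hLHS : ∑ i, (Real.exp (-(β * ε i)) / Zpart β HS0) * Wg i
      = (∑ i, (Real.exp (-(β * ε i)) / Zpart β HS0) * (E i - ε i)) - Qg := by
    calc ∑ i, (Real.exp (-(β * ε i)) / Zpart β HS0) * Wg i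
        = ∑ i, ((Real.exp (-(β * ε i)) / Zpart β HS0) * (E i - ε i)
            - Qg * (Real.exp (-(β * ε i)) / Zpart β HS0)) := by
          refine Finset.sum_congr rfl fun i _ => ?_
          rw [hWg i]
          ring
      _ = _ := by
          rw [Finset.sum_sub_distrib, ← Finset.mul_sum, hsumG]
          ring
  have hRHS : ΔF + β⁻¹ * D
      = β⁻¹ * Real.log (Zpart β HS0) - β⁻¹ * Real.log Zt - Qg := by
    rw [hΔF', hD']
    field_simp
    ring
  rw [hLHS, hRHS]
  have : β⁻¹ * Real.log (Zpart β HS0) - β⁻¹ * Real.log Zt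
      = β⁻¹ * (Real.log (Zpart β HS0) - Real.log Zt) := by ring
  rw [this]
  linarith [core]
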